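/- Let M be a connected smooth Riemannian manifold with continuous metric g and S ⊂ M path-connected. A 1-Lipschitz map f : M → ℝⁿ belongs to ⋂_{ε>0} 𝓘_ε(S) if and only if f is isometric on S, i.e., ℓ(f∘γ) = ℓ_g(γ) for every rectifiable curve γ : [0,1] → S. -/

import Mathlib

open scoped ENNReal

/-- A rectifiable curve in `S` from `x` to `y`, parametrized on `[0,1]`. -/
def IsCurve {M : Type*} [MetricSpace M] (S : Set M) (x y : M) (γ : ℝ → M) : Prop :=
  ContinuousOn γ (Set.Icc 0 1) ∧ Set.MapsTo γ (Set.Icc 0 1) S ∧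
    γ 0 = x ∧ γ 1 = y ∧ eVariationOn γ (Set.Icc 0 1) ≠ ⊤

/-- The intrinsic distance in `S` : the infimum of lengths of rectifiable curves
in `S` joining `x` to `y`. -/
noncomputable def dS {M : Type*} [MetricSpace M] (S : Set M) (x y : M) : ℝ≥0∞ :=
  ⨅ (γ : ℝ → M) (_ : IsCurve S x y γ), eVariationOn γ (Set.Icc 0 1)

/-- The condition defining `F_ε(x,y,S)` for a map `f : M → ℝⁿ`:
`ℓ(f∘γ) + ε ℓ(γ) > (1-ε) d_S(x,y)` for every rectifiable curve `γ` in `S`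
from `x` to `y`. -/
def MemF {M : Type*} [MetricSpace M] (n : ℕ) (ε : ℝ) (S : Set M) (x y : M)
    (f : M → EuclideanSpace ℝ (Fin n)) : Prop :=
  ∀ γ : ℝ → M, IsCurve S x y γ →
    ENNReal.ofReal (1 - ε) * dS S x y <
      eVariationOn (f ∘ γ) (Set.Icc 0 1) + ENNReal.ofReal ε * eVariationOn γ (Set.Icc 0 1)

/-- `edist x y` is a lower bound for the intrinsic distance. -/
lemma edist_le_dS {M : Type*} [MetricSpace M] {S : Set M} {x y : M} :
    edist x y ≤ dS S x y := by
  refine le_iInf fun δ => le_iInf fun hδ => ?_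
  rw [← hδ.2.2.1, ← hδ.2.2.2.1]
  exact eVariationOn.edist_le δ (Set.left_mem_Icc.2 zero_le_one)
    (Set.right_mem_Icc.2 zero_le_one)

/-- Chaining variations over consecutive intervals. -/
lemma sum_eVar_Icc_le {E : Type*} [PseudoEMetricSpace E] (g : ℝ → E) {u : ℕ → ℝ}
    (hu : Monotone u) (us : ∀ i, u i ∈ Set.Icc (0:ℝ) 1) :
    ∀ m : ℕ, ∑ i ∈ Finset.range m, eVariationOn g (Set.Icc (u i) (u (i+1))) ≤
      eVariationOn g (Set.Icc (u 0) (u m))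
  | 0 => by simp
  | (m+1) => by
    have hsub : ∀ i j : ℕ, i ≤ j →
        Set.Icc (0:ℝ) 1 ∩ Set.Icc (u i) (u j) = Set.Icc (u i) (u j) := fun i j _ =>
      Set.inter_eq_self_of_subset_right (Set.Icc_subset_Icc (us i).1 (us j).2)
    have key := eVariationOn.Icc_add_Icc g (s := Set.Icc (0:ℝ) 1)
      (hu (Nat.zero_le m)) (hu m.le_succ) (us m)
    rw [hsub 0 m (Nat.zero_le m), hsub m (m+1) m.le_succ, hsub 0 (m+1) (Nat.zero_le _)] at key
    rw [Finset.sum_range_succ, ← key]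
    exact add_le_add_left (sum_eVar_Icc_le g hu us m) _

/-- Key step in the forward direction: under the family of conditions `MemF`,
the distance between two points of a curve is bounded by the variation of `f ∘ γ`
on the corresponding interval. -/
lemma edist_le_eVar_comp {M : Type*} [MetricSpace M] {n : ℕ} {S : Set M}
    {f : M → EuclideanSpace ℝ (Fin n)}
    (H : ∀ ε : ℝ, 0 < ε → ∀ x ∈ S, ∀ y ∈ S, x ≠ y → MemF n ε S x y f)
    {x y : M} {γ : ℝ → M} (hγ : IsCurve S x y γ) {a b : ℝ}
    (ha : a ∈ Set.Icc (0:ℝ) 1) (hb : b ∈ Set.Icc (0:ℝ) 1) (hab : a ≤ b) :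
    edist (γ a) (γ b) ≤ eVariationOn (f ∘ γ) (Set.Icc a b) := by
  by_cases hgab : γ a = γ b
  · rw [hgab, edist_self]; exact zero_le
  have hlt : a < b := hab.lt_of_ne (fun h => hgab (by rw [h]))
  set φ : ℝ → ℝ := fun t => (b - a) * t + a with hφdef
  have hφmono : Monotone φ := fun s t hst => by
    simp only [hφdef]
    nlinarith [sub_pos.2 hlt]
  have himg : φ '' Set.Icc (0:ℝ) 1 = Set.Icc a b := by
    rw [hφdef]
    rw [Set.image_affine_Icc' (sub_pos.2 hlt) a 0 1]
    norm_num
  have hIccsub : Set.Icc a b ⊆ Set.Icc (0:ℝ) 1 := Set.Icc_subset_Icc ha.1 hb.2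
  have hmaps : Set.MapsTo φ (Set.Icc (0:ℝ) 1) (Set.Icc a b) := by
    rw [← himg]; exact Set.mapsTo_image φ _
  have hφ0 : φ 0 = a := by simp [hφdef]
  have hφ1 : φ 1 = b := by simp [hφdef]
  have hvar : eVariationOn (γ ∘ φ) (Set.Icc (0:ℝ) 1) = eVariationOn γ (Set.Icc a b) := by
    rw [eVariationOn.comp_eq_of_monotoneOn γ φ (hφmono.monotoneOn _), himg]
  have hvarf : eVariationOn (f ∘ (γ ∘ φ)) (Set.Icc (0:ℝ) 1)
      = eVariationOn (f ∘ γ) (Set.Icc a b) := by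
    have : f ∘ (γ ∘ φ) = (f ∘ γ) ∘ φ := rfl
    rw [this, eVariationOn.comp_eq_of_monotoneOn (f ∘ γ) φ (hφmono.monotoneOn _), himg]
  have hVfin : eVariationOn γ (Set.Icc a b) ≠ ⊤ :=
    ne_top_of_le_ne_top hγ.2.2.2.2 (eVariationOn.mono γ hIccsub)
  have hcurve : IsCurve S (γ a) (γ b) (γ ∘ φ) := by
    refine ⟨?_, ?_, by simp [hφ0], by simp [hφ1], by rw [hvar]; exact hVfin⟩
    · exact (hγ.1.mono hIccsub).comp ((continuous_const.mul continuous_id).add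
        continuous_const).continuousOn hmaps
    · exact fun t ht => hγ.2.1 (hIccsub (hmaps ht))
  set D := dS S (γ a) (γ b) with hDdef
  set V := eVariationOn γ (Set.Icc a b) with hVdef
  set L := eVariationOn (f ∘ γ) (Set.Icc a b) with hLdef
  have hDleV : D ≤ V := by
    refine iInf_le_of_le (γ ∘ φ) (iInf_le_of_le hcurve ?_)
    rw [hvar]
  have hDfin : D ≠ ⊤ := ne_top_of_le_ne_top hVfin hDleV
  have hmem : ∀ ε : ℝ, 0 < ε → ENNReal.ofReal (1 - ε) * D < L + ENNReal.ofReal ε * V := by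
    intro ε hε
    have := H ε hε (γ a) (hγ.2.1 (hIccsub ⟨le_refl a, hab⟩)) (γ b)
      (hγ.2.1 (hIccsub ⟨hab, le_refl b⟩)) hgab (γ ∘ φ) hcurve
    rwa [hvar, hvarf] at this
  have hDL : D ≤ L := by
    refine ENNReal.le_of_forall_pos_le_add fun η hη hLfin => ?_
    set C : ℝ := (V + D).toReal with hCdef
    have hC0 : 0 ≤ C := ENNReal.toReal_nonneg
    set ε : ℝ := min ((η : ℝ) / (C + 1)) 1 with hεdef
    have hε0 : 0 < ε := lt_min (div_pos (by exact_mod_cast hη) (by linarith)) one_pos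
    have hε1 : ε ≤ 1 := min_le_right _ _
    -- split D
    have hsplit : D = ENNReal.ofReal (1 - ε) * D + ENNReal.ofReal ε * D := by
      rw [← add_mul, ← ENNReal.ofReal_add (by linarith) hε0.le]
      norm_num
    have h1 : D ≤ L + ENNReal.ofReal ε * (V + D) := by
      calc D = ENNReal.ofReal (1 - ε) * D + ENNReal.ofReal ε * D := hsplit
        _ ≤ (L + ENNReal.ofReal ε * V) + ENNReal.ofReal ε * D :=
            add_le_add_left (hmem ε hε0).le _
        _ = L + ENNReal.ofReal ε * (V + D) := by rw [mul_add, add_assoc]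
    refine h1.trans (add_le_add_right ?_ L)
    have hVD : V + D = ENNReal.ofReal C :=
      (ENNReal.ofReal_toReal (by simp [ENNReal.add_eq_top, hVfin, hDfin])).symm
    rw [hVD, ← ENNReal.ofReal_mul hε0.le]
    calc ENNReal.ofReal (ε * C) ≤ ENNReal.ofReal ((η : ℝ) / (C + 1) * C) := by
          refine ENNReal.ofReal_le_ofReal ?_
          exact mul_le_mul_of_nonneg_right (min_le_left _ _) hC0
      _ ≤ ENNReal.ofReal (η : ℝ) := by
          refine ENNReal.ofReal_le_ofReal ?_
          rw [div_mul_eq_mul_div, div_le_iff₀ (by linarith : (0:ℝ) < C + 1)]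
          nlinarith [η.coe_nonneg, hC0]
      _ = (η : ℝ≥0∞) := by simp
  exact le_trans edist_le_dS (hDL)

theorem stmt10 {M : Type*} [MetricSpace M] (n : ℕ) (S : Set M)
    (hS : IsPathConnected S)
    (f : M → EuclideanSpace ℝ (Fin n)) (hf : LipschitzWith 1 f) :
    (∀ ε : ℝ, 0 < ε → ∀ x ∈ S, ∀ y ∈ S, x ≠ y → MemF n ε S x y f) ↔
    (∀ (x y : M) (γ : ℝ → M), IsCurve S x y γ →
      eVariationOn (f ∘ γ) (Set.Icc 0 1) = eVariationOn γ (Set.Icc 0 1)) := by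
  constructor
  · intro H x y γ hγ
    refine le_antisymm ?_ ?_
    · -- Lipschitz gives ≤
      have := LipschitzOnWith.comp_eVariationOn_le (hf.lipschitzOnWith (s := Set.univ))
        (g := γ) (s := Set.Icc (0:ℝ) 1) (Set.mapsTo_univ γ _)
      simpa using this
    · -- the main direction
      unfold eVariationOn
      refine iSup_le ?_
      rintro ⟨m, u, hu, us⟩
      calc ∑ i ∈ Finset.range m, edist (γ (u (i+1))) (γ (u i))
          ≤ ∑ i ∈ Finset.range m, eVariationOn (f ∘ γ) (Set.Icc (u i) (u (i+1))) := by
            refine Finset.sum_le_sum fun i _ => ?_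
            rw [edist_comm]
            exact edist_le_eVar_comp H hγ (us i) (us (i+1)) (hu i.le_succ)
        _ ≤ eVariationOn (f ∘ γ) (Set.Icc (u 0) (u m)) := sum_eVar_Icc_le _ hu us m
        _ ≤ eVariationOn (f ∘ γ) (Set.Icc 0 1) :=
            eVariationOn.mono _ (Set.Icc_subset_Icc (us 0).1 (us m).2)
  · intro H ε hε x hx y hy hxy γ hγ
    rw [H x y γ hγ]
    have hfin : eVariationOn γ (Set.Icc (0:ℝ) 1) ≠ ⊤ := hγ.2.2.2.2
    have hdle : dS S x y ≤ eVariationOn γ (Set.Icc (0:ℝ) 1) :=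
      iInf_le_of_le γ (iInf_le_of_le hγ le_rfl)
    have hpos : (0 : ℝ≥0∞) < dS S x y := by
      refine lt_of_lt_of_le ?_ edist_le_dS
      simpa [edist_pos] using hxy
    have hvpos : (0 : ℝ≥0∞) < eVariationOn γ (Set.Icc (0:ℝ) 1) := lt_of_lt_of_le hpos hdle
    by_cases h1 : ε < 1
    · calc ENNReal.ofReal (1 - ε) * dS S x y < 1 * dS S x y := by
            refine (mul_comm _ _).trans_lt ((ENNReal.mul_lt_mul_right hpos.ne' (ne_top_of_le_ne_top hfin hdle) ?_).trans_eq (mul_comm _ _))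
            exact ENNReal.ofReal_lt_one.2 (by linarith)
        _ = dS S x y := one_mul _
        _ ≤ eVariationOn γ (Set.Icc 0 1) := hdle
        _ ≤ eVariationOn γ (Set.Icc 0 1) + ENNReal.ofReal ε * eVariationOn γ (Set.Icc 0 1) :=
            le_add_of_nonneg_right zero_le
    · have : ENNReal.ofReal (1 - ε) = 0 := ENNReal.ofReal_eq_zero.2 (by linarith)
      rw [this, zero_mul]
      refine lt_of_lt_of_le ?_ le_add_self
      exact ENNReal.mul_pos (ENNReal.ofReal_pos.2 hε).ne' hvpos.ne'
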